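/- Let $R > 0$, $C > 0$, and let $g : \mathbb{R}^d \to \mathbb{C}$ be measurable with $|g(y)| \leq C R \|y\|$ for all $y \in \mathbb{R}^d$ and $\int_{\mathbb{R}^d} |g(y)|^2\, d\nu_k(y) \leq \nu_k(B(0,R))^{-1}$. Then $\int_{\mathbb{R}^d} \|y\|^{-(2\gamma+d)} |g(y)|\, d\nu_k(y) \leq C\, d_k + 1$, where $d_k = \int_{S^{d-1}} w_k\, d\sigma$. -/

import Mathlib

open MeasureTheory Metric Filter Topology Set

noncomputable section

/-- The Dunkl weight function. -/
def dunklWeight {d : ℕ} (Rp : Finset (EuclideanSpace ℝ (Fin d)))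
    (k : EuclideanSpace ℝ (Fin d) → ℝ) (x : EuclideanSpace ℝ (Fin d)) : ℝ :=
  ∏ ξ ∈ Rp, |(inner ℝ ξ x : ℝ)| ^ (2 * k ξ)

/-- The weighted measure `ν_k`. -/
def dunklMeasure {d : ℕ} (Rp : Finset (EuclideanSpace ℝ (Fin d)))
    (k : EuclideanSpace ℝ (Fin d) → ℝ) : Measure (EuclideanSpace ℝ (Fin d)) :=
  volume.withDensity fun x => ENNReal.ofReal (dunklWeight Rp k x)

/-- The constant `d_k = ∫_{S^{d-1}} w_k dσ`, where `σ` is the surface measure on the unit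
sphere, normalized so that the polar integration formula
`∫ f dx = ∫_0^∞ ∫_{S^{d-1}} f(ry) dσ(y) r^{d-1} dr` holds. -/
def dunklDk {d : ℕ} (Rp : Finset (EuclideanSpace ℝ (Fin d)))
    (k : EuclideanSpace ℝ (Fin d) → ℝ) : ℝ :=
  ∫ y : sphere (0 : EuclideanSpace ℝ (Fin d)) 1, dunklWeight Rp k ↑y
    ∂((volume : Measure (EuclideanSpace ℝ (Fin d))).toSphere)

/-- The index `γ = ∑_{ξ ∈ R₊} k(ξ)`. -/
def dunklGamma {d : ℕ} (Rp : Finset (EuclideanSpace ℝ (Fin d)))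
    (k : EuclideanSpace ℝ (Fin d) → ℝ) : ℝ :=
  ∑ ξ ∈ Rp, k ξ

open scoped ENNReal NNReal
variable {d : ℕ} {Rp : Finset (EuclideanSpace ℝ (Fin d))} {k : EuclideanSpace ℝ (Fin d) → ℝ}

lemma dunklWeight_nonneg (x : EuclideanSpace ℝ (Fin d)) : 0 ≤ dunklWeight Rp k x :=
  Finset.prod_nonneg fun _ _ => Real.rpow_nonneg (abs_nonneg _) _

lemma dunklWeight_continuous (hk : ∀ ξ ∈ Rp, 0 ≤ k ξ) : Continuous (dunklWeight Rp k) := by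
  apply continuous_finset_prod
  intro ξ hξ
  exact (continuous_abs.comp (continuous_const.inner continuous_id)).rpow_const
    (fun x => Or.inr (by have := hk ξ hξ; linarith))

lemma dunklWeight_smul {r : ℝ} (hr : 0 < r) (x : EuclideanSpace ℝ (Fin d)) :
    dunklWeight Rp k (r • x) = r ^ (2 * dunklGamma Rp k) * dunklWeight Rp k x := by
  unfold dunklWeight dunklGamma
  rw [Finset.mul_sum, Real.rpow_sum_of_pos hr, ← Finset.prod_mul_distrib]
  refine Finset.prod_congr rfl fun ξ hξ => ?_
  rw [real_inner_smul_right, abs_mul, abs_of_pos hr,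
    Real.mul_rpow hr.le (abs_nonneg _)]

lemma measurable_rpow_const (c : ℝ) : Measurable fun r : ℝ => r ^ c :=
  measurable_of_continuousOn_compl_singleton 0
    (fun x hx => (Real.continuousAt_rpow_const x c (Or.inl hx)).continuousWithinAt)

lemma dunkl_polar (hd : 0 < d) (hk : ∀ ξ ∈ Rp, 0 ≤ k ξ)
    (φ : ℝ → ℝ≥0∞) (hφ : Measurable φ) :
    ∫⁻ y, φ ‖y‖ ∂(dunklMeasure Rp k)
      = (∫⁻ y : sphere (0 : EuclideanSpace ℝ (Fin d)) 1,
            ENNReal.ofReal (dunklWeight Rp k ↑y)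
          ∂((volume : Measure (EuclideanSpace ℝ (Fin d))).toSphere))
        * ∫⁻ r in Ioi (0:ℝ),
            φ r * ENNReal.ofReal (r ^ (2 * dunklGamma Rp k + d - 1)) := by
  have hwm : Measurable fun x : EuclideanSpace ℝ (Fin d) =>
      ENNReal.ofReal (dunklWeight Rp k x) :=
    (dunklWeight_continuous hk).measurable.ennreal_ofReal
  set Φ : EuclideanSpace ℝ (Fin d) → ℝ≥0∞ :=
    fun y => ENNReal.ofReal (dunklWeight Rp k y) * φ ‖y‖ with hΦ
  have hΦm : Measurable Φ := hwm.mul (hφ.comp measurable_norm)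
  have hφn : Measurable fun y : EuclideanSpace ℝ (Fin d) => φ ‖y‖ := hφ.comp measurable_norm
  rw [dunklMeasure, lintegral_withDensity_eq_lintegral_mul _ hwm hφn]
  haveI : Nontrivial (EuclideanSpace ℝ (Fin d)) :=
    Module.nontrivial_of_finrank_pos (R := ℝ) (by rw [finrank_euclideanSpace_fin]; exact hd)
  have h0 : ∫⁻ y, Φ y = ∫⁻ y in ({(0 : EuclideanSpace ℝ (Fin d))}ᶜ :
      Set (EuclideanSpace ℝ (Fin d))), Φ y := by
    rw [← lintegral_add_compl Φ (measurableSet_singleton (0 : EuclideanSpace ℝ (Fin d)))]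
    simp [Measure.restrict_singleton, measure_singleton]
  show ∫⁻ y, Φ y = _
  rw [h0, ← lintegral_subtype_comap
    (measurableSet_singleton (0 : EuclideanSpace ℝ (Fin d))).compl]
  have hGm : Measurable fun p : sphere (0 : EuclideanSpace ℝ (Fin d)) 1 × Ioi (0:ℝ) =>
      Φ (((homeomorphUnitSphereProd (EuclideanSpace ℝ (Fin d))).symm p :
        ({(0 : EuclideanSpace ℝ (Fin d))}ᶜ : Set (EuclideanSpace ℝ (Fin d)))) :
          EuclideanSpace ℝ (Fin d)) :=
    hΦm.comp (continuous_subtype_val.comp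
      (homeomorphUnitSphereProd (EuclideanSpace ℝ (Fin d))).symm.continuous).measurable
  have key := (Measure.measurePreserving_homeomorphUnitSphereProd
      (volume : Measure (EuclideanSpace ℝ (Fin d)))).lintegral_comp hGm
  simp only [Homeomorph.symm_apply_apply] at key
  rw [key]
  rw [lintegral_prod _ hGm.aemeasurable]
  have hdim : Module.finrank ℝ (EuclideanSpace ℝ (Fin d)) = d := finrank_euclideanSpace_fin
  rw [hdim]
  have inner_eq : ∀ y : sphere (0 : EuclideanSpace ℝ (Fin d)) 1,
      (∫⁻ r : Ioi (0:ℝ),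
          Φ (((homeomorphUnitSphereProd (EuclideanSpace ℝ (Fin d))).symm (y, r) :
            ({(0 : EuclideanSpace ℝ (Fin d))}ᶜ : Set (EuclideanSpace ℝ (Fin d)))) :
              EuclideanSpace ℝ (Fin d))
        ∂(Measure.volumeIoiPow (d - 1)))
      = ENNReal.ofReal (dunklWeight Rp k ↑y)
        * ∫⁻ r in Ioi (0:ℝ), φ r * ENNReal.ofReal (r ^ (2 * dunklGamma Rp k + d - 1)) := by
    intro y
    have hfm : Measurable fun r : Ioi (0:ℝ) => ENNReal.ofReal ((r:ℝ) ^ (d-1)) :=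
      (measurable_subtype_coe.pow_const _).ennreal_ofReal
    have hΨm : Measurable fun r : Ioi (0:ℝ) =>
        Φ (((homeomorphUnitSphereProd (EuclideanSpace ℝ (Fin d))).symm (y, r) :
          ({(0 : EuclideanSpace ℝ (Fin d))}ᶜ : Set (EuclideanSpace ℝ (Fin d)))) :
            EuclideanSpace ℝ (Fin d)) :=
      hΦm.comp (continuous_subtype_val.comp
        ((homeomorphUnitSphereProd (EuclideanSpace ℝ (Fin d))).symm.continuous.comp
          (Continuous.prodMk_right y))).measurable
    rw [Measure.volumeIoiPow, lintegral_withDensity_eq_lintegral_mul _ hfm hΨm]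
    simp only [Pi.mul_apply, homeomorphUnitSphereProd_symm_apply_coe]
    rw [lintegral_subtype_comap measurableSet_Ioi
      (fun r : ℝ => ENNReal.ofReal (r ^ (d-1)) *
        Φ (r • (y : EuclideanSpace ℝ (Fin d))))]
    rw [← lintegral_const_mul' _ _ ENNReal.ofReal_ne_top]
    refine setLIntegral_congr_fun measurableSet_Ioi (
      fun r hr => ?_)
    have hr : (0:ℝ) < r := hr
    have hy : ‖(y : EuclideanSpace ℝ (Fin d))‖ = 1 := by
      simpa [mem_sphere_zero_iff_norm] using y.2
    simp only [hΦ]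
    rw [norm_smul, hy, Real.norm_eq_abs, abs_of_pos hr, mul_one,
      dunklWeight_smul hr, ENNReal.ofReal_mul (by positivity)]
    rw [← Real.rpow_natCast r (d-1), Nat.cast_sub hd, Nat.cast_one]
    have E1 : ENNReal.ofReal (r ^ ((d:ℝ) - 1)) * ENNReal.ofReal (r ^ (2 * dunklGamma Rp k))
        = ENNReal.ofReal (r ^ (2 * dunklGamma Rp k + (d:ℝ) - 1)) := by
      rw [← ENNReal.ofReal_mul (by positivity), ← Real.rpow_add hr]
      ring_nf
    rw [← E1]
    ring
  simp only [inner_eq]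
  have hws : Measurable fun x : sphere (0 : EuclideanSpace ℝ (Fin d)) 1 =>
      ENNReal.ofReal (dunklWeight Rp k ↑x) :=
    hwm.comp measurable_subtype_coe
  rw [lintegral_mul_const _ hws]

lemma lintegral_radial_Ioc {ρ : ℝ} (hρ : 0 < ρ) {e : ℝ} (he : -1 < e) :
    ∫⁻ r in Ioc (0:ℝ) ρ, ENNReal.ofReal (r ^ e)
      = ENNReal.ofReal (ρ ^ (e + 1) / (e + 1)) := by
  rw [← ofReal_integral_eq_lintegral_ofReal ((_root_.intervalIntegral.intervalIntegrable_rpow' he).1) ?_]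
  · rw [← _root_.intervalIntegral.integral_of_le hρ.le, integral_rpow (Or.inl he),
      Real.zero_rpow (by linarith : e + 1 ≠ 0), sub_zero]
  · filter_upwards [ae_restrict_mem measurableSet_Ioc] with x hx using
      Real.rpow_nonneg hx.1.le _

lemma lintegral_radial_Ioi {ρ : ℝ} (hρ : 0 < ρ) {e : ℝ} (he : e < -1) :
    ∫⁻ r in Ioi ρ, ENNReal.ofReal (r ^ e)
      = ENNReal.ofReal (-ρ ^ (e + 1) / (e + 1)) := by
  rw [← ofReal_integral_eq_lintegral_ofReal (integrableOn_Ioi_rpow_of_lt he hρ) ?_,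
    integral_Ioi_rpow_of_lt he hρ]
  filter_upwards [ae_restrict_mem measurableSet_Ioi] with x hx using
    Real.rpow_nonneg (hρ.trans hx).le _


/-- Analytic core of Theorem 3.2: if `|g(y)| ≤ C R ‖y‖` and `∫ |g|² dν_k ≤ ν_k(B(0,R))⁻¹`,
then `∫_{ℝ^d} ‖y‖^{-(2γ+d)} |g(y)| dν_k(y) ≤ C d_k + 1`. -/
theorem lintegral_hardy_estimate {d : ℕ} (hd : 0 < d)
    (Rp : Finset (EuclideanSpace ℝ (Fin d))) (hRp : ∀ ξ ∈ Rp, ξ ≠ 0)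
    (k : EuclideanSpace ℝ (Fin d) → ℝ) (hk : ∀ ξ ∈ Rp, 0 ≤ k ξ)
    (R C : ℝ) (hR : 0 < R) (hC : 0 < C)
    (g : EuclideanSpace ℝ (Fin d) → ℂ) (hg : Measurable g)
    (hbound : ∀ y : EuclideanSpace ℝ (Fin d), ‖g y‖ ≤ C * R * ‖y‖)
    (hL2 : ∫⁻ y, ENNReal.ofReal (‖g y‖ ^ 2) ∂(dunklMeasure Rp k)
      ≤ ((dunklMeasure Rp k) (closedBall (0 : EuclideanSpace ℝ (Fin d)) R))⁻¹) :
    ∫⁻ y, ENNReal.ofReal (‖y‖ ^ (-(2 * dunklGamma Rp k + d)) * ‖g y‖)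
          ∂(dunklMeasure Rp k)
      ≤ ENNReal.ofReal (C * dunklDk Rp k + 1) := by

  classical
  set γ := dunklGamma Rp k with hγdef
  have hγ : 0 ≤ γ := Finset.sum_nonneg hk
  have hdR : (0:ℝ) < d := Nat.cast_pos.mpr hd
  set s : ℝ := 2 * γ + d with hs_def
  have hs : 0 < s := by rw [hs_def]; linarith
  set ν := dunklMeasure Rp k with hν
  set D' : ℝ≥0∞ := ∫⁻ y : sphere (0 : EuclideanSpace ℝ (Fin d)) 1,
      ENNReal.ofReal (dunklWeight Rp k ↑y)
    ∂((volume : Measure (EuclideanSpace ℝ (Fin d))).toSphere) with hD'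
  have polar : ∀ φ : ℝ → ℝ≥0∞, Measurable φ →
      ∫⁻ y, φ ‖y‖ ∂ν
        = D' * ∫⁻ r in Ioi (0:ℝ), φ r * ENNReal.ofReal (r ^ (2 * γ + d - 1)) :=
    fun φ hφ => dunkl_polar hd hk φ hφ
  -- D' is ofReal of dunklDk
  haveI : IsFiniteMeasureOnCompacts
      ((volume : Measure (EuclideanSpace ℝ (Fin d))).toSphere) :=
    ⟨fun _ _ => measure_lt_top _ _⟩
  have hwint : Integrable
      (fun y : sphere (0 : EuclideanSpace ℝ (Fin d)) 1 => dunklWeight Rp k ↑y)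
      ((volume : Measure (EuclideanSpace ℝ (Fin d))).toSphere) := by
    have hc : Continuous fun y : sphere (0 : EuclideanSpace ℝ (Fin d)) 1 =>
        dunklWeight Rp k ↑y :=
      (dunklWeight_continuous hk).comp continuous_subtype_val
    exact integrableOn_univ.mp (hc.continuousOn.integrableOn_compact isCompact_univ)
  have hD'real : D' = ENNReal.ofReal (dunklDk Rp k) := by
    rw [hD', ← ofReal_integral_eq_lintegral_ofReal hwint
      (Eventually.of_forall fun y => dunklWeight_nonneg _)]
    rfl
  have hdk : 0 ≤ dunklDk Rp k := integral_nonneg fun y => dunklWeight_nonneg _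
  -- measure of closed balls
  have hVcb : ∀ ρ : ℝ, 0 < ρ →
      ν (closedBall (0 : EuclideanSpace ℝ (Fin d)) ρ)
        = D' * ENNReal.ofReal (ρ ^ s / s) := by
    intro ρ hρ
    have hφm : Measurable ((Iic ρ).indicator (fun _ : ℝ => (1:ℝ≥0∞))) :=
      measurable_const.indicator measurableSet_Iic
    have h1 : ν (closedBall (0 : EuclideanSpace ℝ (Fin d)) ρ)
        = ∫⁻ y, (Iic ρ).indicator (fun _ => (1:ℝ≥0∞)) ‖y‖ ∂ν := by
      rw [← lintegral_indicator_one measurableSet_closedBall]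
      refine lintegral_congr fun y => ?_
      by_cases h : ‖y‖ ≤ ρ <;>
        simp [Set.indicator_apply, h, mem_closedBall_zero_iff]
    rw [h1, polar _ hφm]
    congr 1
    have h2 : ∀ r : ℝ, (Iic ρ).indicator (fun _ => (1:ℝ≥0∞)) r
          * ENNReal.ofReal (r ^ (2 * γ + (d:ℝ) - 1))
        = (Iic ρ).indicator (fun r => ENNReal.ofReal (r ^ (2 * γ + (d:ℝ) - 1))) r := by
      intro r; by_cases h : r ∈ Iic ρ <;> simp [Set.indicator_apply, h]
    rw [lintegral_congr h2, lintegral_indicator measurableSet_Iic,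
      Measure.restrict_restrict measurableSet_Iic,
      show Iic ρ ∩ Ioi (0:ℝ) = Ioc 0 ρ by ext x; simp [and_comm],
      lintegral_radial_Ioc hρ (by linarith : (-1:ℝ) < 2 * γ + (d:ℝ) - 1),
      show 2 * γ + (d:ℝ) - 1 + 1 = s by rw [hs_def]; ring]
  -- the integrand
  set F : EuclideanSpace ℝ (Fin d) → ℝ≥0∞ :=
    fun y => ENNReal.ofReal (‖y‖ ^ (-s) * ‖g y‖) with hF
  have hFm : Measurable F :=
    (((measurable_rpow_const (-s)).comp measurable_norm).mul
      (hg.norm)).ennreal_ofReal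
  set B : Set (EuclideanSpace ℝ (Fin d)) := closedBall 0 (1/R) with hB
  have hRinv : (0:ℝ) < 1/R := by positivity
  -- part 1
  have part1 : ∫⁻ y in B, F y ∂ν ≤ ENNReal.ofReal C * D' := by
    set φ1 : ℝ → ℝ≥0∞ :=
      (Iic (1/R)).indicator fun r => ENNReal.ofReal (C * R * r ^ (1 - s)) with hφ1
    have hφ1m : Measurable φ1 :=
      (((measurable_rpow_const (1-s)).const_mul (C*R)).ennreal_ofReal).indicator
        measurableSet_Iic
    have bound1 : ∀ y : EuclideanSpace ℝ (Fin d),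
        F y ≤ ENNReal.ofReal (C * R * ‖y‖ ^ (1 - s)) := by
      intro y
      apply ENNReal.ofReal_le_ofReal
      by_cases hy : y = 0
      · subst hy
        rw [norm_zero, Real.zero_rpow (by linarith : -s ≠ 0), zero_mul]
        positivity
      · have hn : 0 < ‖y‖ := norm_pos_iff.mpr hy
        calc ‖y‖ ^ (-s) * ‖g y‖
            ≤ ‖y‖ ^ (-s) * (C * R * ‖y‖) :=
              mul_le_mul_of_nonneg_left (hbound y)
                (Real.rpow_nonneg (norm_nonneg y) _)
          _ = C * R * (‖y‖ ^ (-s) * ‖y‖ ^ (1:ℝ)) := by rw [Real.rpow_one]; ring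
          _ = C * R * ‖y‖ ^ (1 - s) := by
              rw [← Real.rpow_add hn, show -s + 1 = 1 - s by ring]
    calc ∫⁻ y in B, F y ∂ν ≤ ∫⁻ y in B, φ1 ‖y‖ ∂ν := by
          refine setLIntegral_mono (hφ1m.comp measurable_norm) fun y hy => ?_
          have : ‖y‖ ∈ Iic (1/R) := mem_closedBall_zero_iff.mp hy
          rw [hφ1, Set.indicator_of_mem this]
          exact bound1 y
      _ ≤ ∫⁻ y, φ1 ‖y‖ ∂ν := setLIntegral_le_lintegral _ _
      _ = D' * ∫⁻ r in Ioi (0:ℝ), φ1 r * ENNReal.ofReal (r ^ (2 * γ + (d:ℝ) - 1)) :=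
          polar _ hφ1m
      _ = D' * ENNReal.ofReal C := by
          congr 1
          have hc1 : ∫⁻ r in Ioc (0:ℝ) (1/R),
              ENNReal.ofReal (C * R * r ^ (1 - s))
                * ENNReal.ofReal (r ^ (2 * γ + (d:ℝ) - 1))
              = ∫⁻ _ in Ioc (0:ℝ) (1/R), ENNReal.ofReal (C * R) := by
            refine setLIntegral_congr_fun measurableSet_Ioc
              (fun r hr => ?_)
            rw [← ENNReal.ofReal_mul
              (mul_nonneg (mul_nonneg hC.le hR.le) (Real.rpow_nonneg hr.1.le _)), mul_assoc,
              ← Real.rpow_add hr.1,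
              show 1 - s + (2 * γ + (d:ℝ) - 1) = 0 by rw [hs_def]; ring,
              Real.rpow_zero, mul_one]
          rw [lintegral_congr fun r => (Set.indicator_mul_left _ _
              (fun r => ENNReal.ofReal (r ^ (2 * γ + (d:ℝ) - 1)))).symm,
            lintegral_indicator measurableSet_Iic,
            Measure.restrict_restrict measurableSet_Iic,
            show Iic (1/R) ∩ Ioi (0:ℝ) = Ioc 0 (1/R) by ext x; simp [and_comm],
            hc1, setLIntegral_const, Real.volume_Ioc, sub_zero,
            ← ENNReal.ofReal_mul (by positivity),
            show C * R * (1/R) = C by field_simp]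
      _ = ENNReal.ofReal C * D' := mul_comm _ _
  -- part 2
  have part2 : ∫⁻ y in Bᶜ, F y ∂ν ≤ 1 := by
    set V : ℝ≥0∞ := D' * ENNReal.ofReal (R ^ s / s) with hV
    have hf2m : Measurable fun y : EuclideanSpace ℝ (Fin d) =>
        ENNReal.ofReal (‖y‖ ^ (-s)) :=
      ((measurable_rpow_const (-s)).comp measurable_norm).ennreal_ofReal
    have hg2m : Measurable fun y : EuclideanSpace ℝ (Fin d) =>
        ENNReal.ofReal (‖g y‖) :=
      (hg.norm).ennreal_ofReal
    have hH := ENNReal.lintegral_mul_le_Lp_mul_Lq (ν.restrict Bᶜ)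
      (Real.holderConjugate_iff.mpr ⟨one_lt_two, by norm_num⟩ : Real.HolderConjugate 2 2)
      hf2m.aemeasurable hg2m.aemeasurable
    simp only [Pi.mul_apply] at hH
    have hFsplit : ∀ y : EuclideanSpace ℝ (Fin d),
        F y = ENNReal.ofReal (‖y‖ ^ (-s)) * ENNReal.ofReal (‖g y‖) :=
      fun y => ENNReal.ofReal_mul (Real.rpow_nonneg (norm_nonneg _) _)
    -- first factor
    have hXeq : ∫⁻ y in Bᶜ, ENNReal.ofReal (‖y‖ ^ (-s)) ^ (2:ℝ) ∂ν = V := by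
      have e1 : ∀ y : EuclideanSpace ℝ (Fin d),
          ENNReal.ofReal (‖y‖ ^ (-s)) ^ (2:ℝ) = ENNReal.ofReal (‖y‖ ^ (-s * 2)) := by
        intro y
        rw [ENNReal.ofReal_rpow_of_nonneg (Real.rpow_nonneg (norm_nonneg _) _)
          (by norm_num : (0:ℝ) ≤ 2), ← Real.rpow_mul (norm_nonneg y)]
      simp only [e1]
      set φ2 : ℝ → ℝ≥0∞ :=
        (Ioi (1/R)).indicator fun r => ENNReal.ofReal (r ^ (-s * 2)) with hφ2
      have hφ2m : Measurable φ2 :=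
        ((measurable_rpow_const (-s * 2)).ennreal_ofReal).indicator measurableSet_Ioi
      have h1 : ∫⁻ y in Bᶜ, ENNReal.ofReal (‖y‖ ^ (-s * 2)) ∂ν
          = ∫⁻ y, φ2 ‖y‖ ∂ν := by
        rw [← lintegral_indicator measurableSet_closedBall.compl]
        refine lintegral_congr fun y => ?_
        by_cases h : 1/R < ‖y‖
        · have h1m : y ∈ Bᶜ := by
            simp only [hB, mem_compl_iff, mem_closedBall_zero_iff, not_le]
            exact h
          rw [Set.indicator_of_mem h1m, hφ2,
            Set.indicator_of_mem (by simpa [mem_Ioi] using h)]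
        · have hyB : y ∈ B := by rw [hB, mem_closedBall_zero_iff]; exact not_lt.mp h
          rw [Set.indicator_of_notMem (Set.notMem_compl_iff.mpr hyB), hφ2,
            Set.indicator_of_notMem (by simpa [mem_Ioi] using h)]
      rw [h1, polar _ hφ2m, hV]
      congr 1
      have hc2 : ∫⁻ r in Ioi (1/R),
          ENNReal.ofReal (r ^ (-s * 2)) * ENNReal.ofReal (r ^ (2 * γ + (d:ℝ) - 1))
          = ∫⁻ r in Ioi (1/R), ENNReal.ofReal (r ^ (-s - 1)) := by
        refine setLIntegral_congr_fun measurableSet_Ioi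
          (fun r hr => ?_)
        rw [← ENNReal.ofReal_mul (Real.rpow_nonneg (le_of_lt (hRinv.trans hr)) _),
          ← Real.rpow_add (hRinv.trans hr),
          show -s * 2 + (2 * γ + (d:ℝ) - 1) = -s - 1 by rw [hs_def]; ring]
      rw [lintegral_congr fun r => (Set.indicator_mul_left _ _
          (fun r => ENNReal.ofReal (r ^ (2 * γ + (d:ℝ) - 1)))).symm,
        lintegral_indicator measurableSet_Ioi,
        Measure.restrict_restrict measurableSet_Ioi,
        inter_eq_left.mpr (Ioi_subset_Ioi hRinv.le),
        hc2, lintegral_radial_Ioi hRinv (by linarith : -s - 1 < -1),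
        show -s - 1 + 1 = -s by ring]
      congr 1
      rw [one_div, Real.inv_rpow hR.le, Real.rpow_neg hR.le, inv_inv, neg_div_neg_eq]
    -- second factor
    have hYle : ∫⁻ y in Bᶜ, ENNReal.ofReal (‖g y‖) ^ (2:ℝ) ∂ν ≤ V⁻¹ := by
      have e2 : ∀ y : EuclideanSpace ℝ (Fin d),
          ENNReal.ofReal (‖g y‖) ^ (2:ℝ)
            = ENNReal.ofReal (‖g y‖ ^ 2) := by
        intro y
        rw [ENNReal.ofReal_rpow_of_nonneg (norm_nonneg _)
          (by norm_num : (0:ℝ) ≤ 2)]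
        congr 1
        rw [← Real.rpow_natCast (‖g y‖) 2]
        norm_num
      simp only [e2]
      calc ∫⁻ y in Bᶜ, ENNReal.ofReal (‖g y‖ ^ 2) ∂ν
          ≤ ∫⁻ y, ENNReal.ofReal (‖g y‖ ^ 2) ∂ν :=
            setLIntegral_le_lintegral _ _
        _ ≤ (ν (closedBall (0 : EuclideanSpace ℝ (Fin d)) R))⁻¹ := hL2
        _ = V⁻¹ := by rw [hVcb R hR]
    calc ∫⁻ y in Bᶜ, F y ∂ν
        = ∫⁻ y in Bᶜ, ENNReal.ofReal (‖y‖ ^ (-s)) * ENNReal.ofReal (‖g y‖) ∂ν := by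
          exact lintegral_congr fun y => hFsplit y
      _ ≤ (∫⁻ y in Bᶜ, ENNReal.ofReal (‖y‖ ^ (-s)) ^ (2:ℝ) ∂ν) ^ (1/(2:ℝ))
          * (∫⁻ y in Bᶜ, ENNReal.ofReal (‖g y‖) ^ (2:ℝ) ∂ν) ^ (1/(2:ℝ)) := hH
      _ ≤ V ^ (1/(2:ℝ)) * (V⁻¹) ^ (1/(2:ℝ)) :=
          mul_le_mul' (ENNReal.rpow_le_rpow (le_of_eq hXeq) (by norm_num))
            (ENNReal.rpow_le_rpow hYle (by norm_num))
      _ = (V * V⁻¹) ^ (1/(2:ℝ)) := (ENNReal.mul_rpow_of_nonneg _ _ (by norm_num)).symm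
      _ ≤ 1 ^ (1/(2:ℝ)) :=
          ENNReal.rpow_le_rpow (ENNReal.mul_inv_le_one V) (by norm_num)
      _ = 1 := ENNReal.one_rpow _
  calc ∫⁻ y, F y ∂ν = ∫⁻ y in B, F y ∂ν + ∫⁻ y in Bᶜ, F y ∂ν :=
        (lintegral_add_compl F measurableSet_closedBall).symm
    _ ≤ ENNReal.ofReal C * D' + 1 := add_le_add part1 part2
    _ = ENNReal.ofReal (C * dunklDk Rp k + 1) := by
        rw [hD'real, ← ENNReal.ofReal_mul hC.le,
          ENNReal.ofReal_add (mul_nonneg hC.le hdk) zero_le_one, ENNReal.ofReal_one]
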